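/- Let G be an n-vertex graph and C a cycle in G with a fixed orientation, and let x ∈ V(G) - V(C). If there exist neighbors u, w of x on C such that the successors u⁺ and w⁺ on C are adjacent in G, then G has a cycle with vertex set V(C) ∪ {x}. -/

import Mathlib

open SimpleGraph

variable {V : Type*}

/-- The disjoint union `P2 ∪ P3`: edge 0-1, path 2-3-4, on `Fin 5`. -/
def P2P3 : SimpleGraph (Fin 5) := SimpleGraph.fromRel (fun a b =>
  (a = 0 ∧ b = 1) ∨ (a = 2 ∧ b = 3) ∨ (a = 3 ∧ b = 4))

/-- `G` has no induced subgraph isomorphic to `P2 ∪ P3`. -/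
def P2P3Free (G : SimpleGraph V) : Prop :=
  ¬ ∃ f : Fin 5 ↪ V, ∀ a b, P2P3.Adj a b ↔ G.Adj (f a) (f b)

/-- The number of connected components of `G - S`. -/
noncomputable def numComponents [Fintype V] (G : SimpleGraph V) (S : Finset V) : ℕ :=
  Nat.card ((G.induce ((↑S : Set V)ᶜ)).ConnectedComponent)

/-- `G` is `t`-tough: `|S| ≥ t·c(G-S)` whenever `c(G-S) ≥ 2`. -/
def IsTough [Fintype V] (t : ℝ) (G : SimpleGraph V) : Prop :=
  ∀ S : Finset V, 2 ≤ numComponents G S → t * numComponents G S ≤ S.card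



open SimpleGraph

namespace CycleAux

variable {V : Type*} {G : SimpleGraph V} {u v : V}

open SimpleGraph.Walk List

/-- Segment of a walk from index `a` to `a+n`. -/
def seg (p : G.Walk u v) (a : ℕ) : (n : ℕ) → a + n ≤ p.length →
    G.Walk (p.getVert a) (p.getVert (a + n))
  | 0, _ => Walk.nil
  | n+1, h => (seg p a n (Nat.le_of_succ_le h)).concat (p.adj_getVert_succ (by omega))

lemma seg_support (p : G.Walk u v) (a : ℕ) : ∀ (n : ℕ) (h : a + n ≤ p.length),
    (seg p a n h).support = (List.range' a (n+1)).map p.getVert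
  | 0, _ => by simp [seg]
  | n+1, h => by
    rw [seg, support_concat, seg_support p a n (Nat.le_of_succ_le h),
      List.range'_1_concat (s := a) (n := n+1), List.map_append]
    simp [Nat.add_assoc]

lemma getVert_eq_support_getElem (p : G.Walk u v) {i : ℕ} (h : i ≤ p.length) :
    p.getVert i = p.support[i]'(by rw [length_support]; omega) := by
  induction p generalizing i with
  | nil => simp_all [Walk.getVert]
  | cons hadj q ih =>
    cases i with
    | zero => simp
    | succ n =>
      rw [getVert_cons_succ]
      simp only [support_cons, List.getElem_cons_succ]
      exact ih (by simp only [Walk.length_cons] at h; omega)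

lemma IsCycle.getVert_inj {p : G.Walk v v} (hp : p.IsCycle) {a b : ℕ} (hab : a < b)
    (hb : b ≤ p.length) (h : p.getVert a = p.getVert b) : a = 0 ∧ b = p.length := by
  set t := p.support.tail with htdef
  have ht : t.Nodup := hp.support_nodup
  have hlen : p.support.length = p.length + 1 := length_support p
  have hsupp : p.support = v :: t := by
    cases p with
    | nil => exact absurd rfl hp.ne_nil
    | cons h q => simp [htdef]
  have htl : t.length = p.length := by
    rw [hsupp] at hlen; simpa using hlen
  have hget : ∀ k (hk : 1 ≤ k) (hk' : k ≤ p.length),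
      p.getVert k = t[k-1]'(by omega) := by
    intro k hk hk'
    obtain ⟨m, rfl⟩ : ∃ m, k = m + 1 := ⟨k - 1, by omega⟩
    rw [getVert_eq_support_getElem p hk']
    simp only [Nat.add_sub_cancel]
    simp only [hsupp, List.getElem_cons_succ]
  rcases Nat.eq_zero_or_pos a with ha | ha
  · subst ha
    refine ⟨rfl, ?_⟩
    have h1 : p.getVert b = v := by rw [← h, Walk.getVert_zero]
    have h2 : p.getVert p.length = v := Walk.getVert_length p
    have hb1 : 1 ≤ b := hab
    have hl1 : 1 ≤ p.length := le_trans hb1 hb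
    have e1 : t[b-1]'(by omega) = v := by rw [← hget b hb1 hb, h1]
    have e2 : t[p.length-1]'(by omega) = v := by
      rw [← hget p.length hl1 le_rfl, h2]
    have := (ht.getElem_inj_iff).mp (e1.trans e2.symm)
    omega
  · exfalso
    have e : t[a-1]'(by omega) = t[b-1]'(by omega) := by
      rw [← hget a ha (by omega), ← hget b (by omega) hb, h]
    have := (ht.getElem_inj_iff).mp e
    omega


lemma main {v : V} {C : G.Walk v v} (hC : C.IsCycle)
    {x : V} (hx : x ∉ C.support) {i j : ℕ} (hij : i < j) (hj : j < C.length)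
    (hxu : G.Adj x (C.getVert i)) (hxw : G.Adj x (C.getVert j))
    (hadj : G.Adj (C.getVert (i+1)) (C.getVert (j+1))) :
    ∃ (a : V) (C' : G.Walk a a), C'.IsCycle ∧
      {y | y ∈ C'.support} = insert x {y | y ∈ C.support} := by
  set L := C.length with hL
  set gv := C.getVert with hgv
  -- injectivity of getVert on [1, L]
  have hinj : ∀ a b : ℕ, 1 ≤ a → a ≤ L → 1 ≤ b → b ≤ L → gv a = gv b → a = b := by
    intro a b ha haL hb hbL hab
    rcases lt_trichotomy a b with hlt | he | hgt
    · obtain ⟨h0, _⟩ := IsCycle.getVert_inj hC hlt hbL hab; omega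
    · exact he
    · obtain ⟨h0, _⟩ := IsCycle.getVert_inj hC hgt haL hab.symm; omega
  have hgvL : gv L = v := C.getVert_length
  -- the segments
  let A : G.Walk (gv (i+1)) (gv j) :=
    (seg C (i+1) (j-(i+1)) (by omega)).copy rfl (by congr 1; omega)
  let B1 : G.Walk (gv (j+1)) v :=
    (seg C (j+1) (L-(j+1)) (by omega)).copy rfl
      (by rw [show j+1+(L-(j+1)) = L from by omega]; exact hgvL)
  let B2 : G.Walk v (gv i) :=
    (seg C 0 i (by omega)).copy (C.getVert_zero) (by rw [Nat.zero_add])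
  let p : G.Walk (gv j) (gv i) := A.reverse.append (Walk.cons hadj (B1.append B2))
  -- support of p
  have hAs : A.support = (List.range' (i+1) (j-i)).map gv := by
    show ((seg C (i+1) (j-(i+1)) _).copy rfl _).support = _
    rw [Walk.support_copy, seg_support, show j-(i+1)+1 = j-i from by omega]
  have hB1s : B1.support = (List.range' (j+1) (L-j)).map gv := by
    show ((seg C (j+1) (L-(j+1)) _).copy rfl _).support = _
    rw [Walk.support_copy, seg_support, show L-(j+1)+1 = L-j from by omega]
  have hB2s : B2.support = (List.range' 0 (i+1)).map gv := by
    show ((seg C 0 i _).copy _ _).support = _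
    rw [Walk.support_copy, seg_support]
  have hps : p.support = ((List.range' (i+1) (j-i)).map gv).reverse ++
      ((List.range' (j+1) (L-j)).map gv ++ (List.range' 1 i).map gv) := by
    show (A.reverse.append (Walk.cons hadj (B1.append B2))).support = _
    rw [Walk.support_append, Walk.support_reverse, hAs, Walk.support_cons,
      List.tail_cons, Walk.support_append, hB1s, hB2s]
    rw [List.range'_succ, List.map_cons, List.tail_cons, Nat.zero_add]
  -- p.support is a permutation of getVert over [1, L]
  have hperm : p.support.Perm ((List.range' 1 L).map gv) := by
    have hsplit : (List.range' 1 i ++ List.range' (i+1) (j-i)) ++ List.range' (j+1) (L-j)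
        = (List.range' 1 L : List ℕ) := by
      rw [show i+1 = 1+i from by omega, List.range'_append_1,
        show j+1 = 1+(i+(j-i)) from by omega, List.range'_append_1]
      congr 1
      omega
    rw [hps, ← hsplit]
    calc ((List.range' (i+1) (j-i)).map gv).reverse ++
          ((List.range' (j+1) (L-j)).map gv ++ (List.range' 1 i).map gv)
        ~ (List.range' (i+1) (j-i)).map gv ++
          ((List.range' (j+1) (L-j)).map gv ++ (List.range' 1 i).map gv) :=
          ((List.range' (i+1) (j-i)).map gv).reverse_perm.append_right _
      _ ~ ((List.range' (j+1) (L-j)).map gv ++ (List.range' 1 i).map gv) ++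
          (List.range' (i+1) (j-i)).map gv := List.perm_append_comm
      _ = (List.range' (j+1) (L-j)).map gv ++ ((List.range' 1 i).map gv ++
          (List.range' (i+1) (j-i)).map gv) := by rw [List.append_assoc]
      _ ~ ((List.range' 1 i).map gv ++ (List.range' (i+1) (j-i)).map gv) ++
          (List.range' (j+1) (L-j)).map gv := List.perm_append_comm
      _ = ((List.range' 1 i ++ List.range' (i+1) (j-i)) ++ List.range' (j+1) (L-j)).map gv := by
          simp [List.map_append]
  have hnd : ((List.range' 1 L).map gv).Nodup := by
    refine List.Nodup.map_on ?_ (List.nodup_range' (s := 1) (n := L))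
    intro a ha b hb hab
    rw [List.mem_range'_1] at ha hb
    exact hinj a b ha.1 (by omega) hb.1 (by omega) hab
  have hpnd : p.support.Nodup := hperm.nodup_iff.mpr hnd
  -- membership in p.support equals membership in C.support
  have hmem : ∀ y, y ∈ p.support ↔ y ∈ C.support := by
    intro y
    rw [hperm.mem_iff, List.mem_map, Walk.mem_support_iff_exists_getVert]
    constructor
    · rintro ⟨k, hk, rfl⟩
      rw [List.mem_range'_1] at hk
      exact ⟨k, rfl, by omega⟩
    · rintro ⟨n, rfl, hn⟩
      rcases Nat.eq_zero_or_pos n with h0 | h0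
      · refine ⟨L, by rw [List.mem_range'_1]; omega, ?_⟩
        rw [hgvL, h0]
        exact C.getVert_zero.symm
      · exact ⟨n, by rw [List.mem_range'_1]; omega, rfl⟩
  have hxp : x ∉ p.support := fun hxps => hx ((hmem x).mp hxps)
  -- the new cycle
  let q : G.Walk (gv j) x := p.concat hxu.symm
  have hqp : q.IsPath := by
    rw [Walk.isPath_def]
    show (p.concat hxu.symm).support.Nodup
    rw [Walk.support_concat, List.nodup_append]
    exact ⟨hpnd, List.nodup_singleton x, by simpa using fun (a : V) (ha : a ∈ p.support) (hax : a = x) => hxp (hax ▸ ha)⟩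
  have hgvj_mem : gv j ∈ C.support := Walk.mem_support_iff_exists_getVert.mpr ⟨j, rfl, by omega⟩
  have hedge : s(x, gv j) ∉ q.edges := by
    intro hmem'
    show False
    rw [show q = p.concat hxu.symm from rfl, Walk.edges_concat, List.concat_eq_append,
      List.mem_append, List.mem_singleton] at hmem'
    rcases hmem' with h1 | h1
    · exact hxp (p.fst_mem_support_of_mem_edges h1)
    · rw [Sym2.eq_iff] at h1
      rcases h1 with ⟨_, h2⟩ | ⟨_, h2⟩
      · exact hx (h2 ▸ hgvj_mem)
      · rcases Nat.eq_zero_or_pos i with h0 | h0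
        · subst h0
          have h3 : gv 0 = gv j := h2.symm
          obtain ⟨-, hjL⟩ := IsCycle.getVert_inj hC (show 0 < j from by omega) (by omega) h3
          omega
        · have := hinj j i (by omega) (by omega) h0 (by omega) h2
          omega
  refine ⟨x, Walk.cons hxw q, ?_, ?_⟩
  · exact (Walk.cons_isCycle_iff q hxw).mpr ⟨hqp, hedge⟩
  · ext y
    simp only [Set.mem_setOf_eq, Set.mem_insert_iff, Walk.support_cons, List.mem_cons,
      show q = p.concat hxu.symm from rfl, Walk.support_concat, List.concat_eq_append,
      List.mem_append, List.mem_singleton, hmem y]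
    tauto

end CycleAux




theorem stmt18 [Fintype V] (G : SimpleGraph V)
    (v : V) (C : G.Walk v v) (hC : C.IsCycle)
    (x : V) (hx : x ∉ C.support)
    (h : ∃ i j : ℕ, i < C.length ∧ j < C.length ∧
      G.Adj x (C.getVert i) ∧ G.Adj x (C.getVert j) ∧
      G.Adj (C.getVert (i + 1)) (C.getVert (j + 1))) :
    ∃ (a : V) (C' : G.Walk a a), C'.IsCycle ∧
      {y | y ∈ C'.support} = insert x {y | y ∈ C.support} := by
  obtain ⟨i, j, hi, hj, hxi, hxj, hadj⟩ := h
  rcases lt_trichotomy i j with hij | rfl | hij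
  · exact CycleAux.main hC hx hij hj hxi hxj hadj
  · exact (hadj.ne rfl).elim
  · exact CycleAux.main hC hx hij hi hxj hxi hadj.symm
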